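/- Let K be a finite extension of ℚ with ring of integers A. There exists a nonzero integer N such that the localization A[1/N] is a principal ideal domain (hence a UFD). -/

import Mathlib

open NumberField

set_option maxHeartbeats 1000000 in
theorem stmt_6 (K : Type*) [Field K] [NumberField K] :
    ∃ N : ℤ, N ≠ 0 ∧
      IsPrincipalIdealRing (Localization.Away ((N : NumberField.RingOfIntegers K))) := by
  classical
  set A := NumberField.RingOfIntegers K
  -- choose representatives of all ideal classes
  choose I hI using ClassGroup.mk0_surjective (R := A)
  set n : ℕ := ∏ c : ClassGroup A, Ideal.absNorm ((I c : Ideal A))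
  have hn : n ≠ 0 := by
    apply Finset.prod_ne_zero_iff.mpr
    intro c _
    rw [ne_eq, Ideal.absNorm_eq_zero_iff]
    exact nonZeroDivisors.coe_ne_zero (I c)
  refine ⟨(n : ℤ), Int.natCast_ne_zero.mpr hn, ?_⟩
  have hNA : (((n : ℤ) : A)) = (n : A) := by push_cast; rfl
  have hN0 : ((n : ℤ) : A) ≠ 0 := by
    rw [hNA]
    exact_mod_cast hn
  -- the element N lies in every representative ideal
  have hmem : ∀ c : ClassGroup A, ((n : ℤ) : A) ∈ (I c : Ideal A) := by
    intro c
    rw [hNA]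
    obtain ⟨m, hm⟩ : Ideal.absNorm ((I c : Ideal A)) ∣ n :=
      Finset.dvd_prod_of_mem _ (Finset.mem_univ c)
    rw [hm]
    push_cast
    convert Ideal.mul_mem_right (m : A) _ (Ideal.absNorm_mem (I c : Ideal A)) using 1
    exact Nat.cast_mul _ _
  set R := Localization.Away (((n : ℤ) : A))
  have hM : Submonoid.powers (((n : ℤ) : A)) ≤ nonZeroDivisors A :=
    powers_le_nonZeroDivisors_of_noZeroDivisors hN0
  haveI hRdomain : IsDomain R := IsLocalization.isDomain_of_le_nonZeroDivisors R hM
  haveI hRdedekind : IsDedekindDomain R := IsLocalization.isDedekindDomain A hM R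
  have hinj : Function.Injective (algebraMap A R) := IsLocalization.injective R hM
  apply IsPrincipalIdealRing.of_prime
  intro P hP
  by_cases hPbot : P = ⊥
  · exact ⟨0, by rw [hPbot, Ideal.submodule_span_eq, Ideal.span_singleton_eq_bot.mpr rfl]⟩
  set p : Ideal A := Ideal.comap (algebraMap A R) P with hp
  have hmap : Ideal.map (algebraMap A R) p = P :=
    IsLocalization.map_comap (Submonoid.powers (((n : ℤ) : A))) R P
  have hpbot : p ≠ ⊥ := by
    intro h
    apply hPbot
    rw [← hmap, h, Ideal.map_bot]
  have hpmem : p ∈ nonZeroDivisors (Ideal A) := mem_nonZeroDivisors_of_ne_zero hpbot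
  set c := ClassGroup.mk0 (⟨p, hpmem⟩ : nonZeroDivisors (Ideal A))
  have : ClassGroup.mk0 (I c) = ClassGroup.mk0 (⟨p, hpmem⟩ : nonZeroDivisors (Ideal A)) := hI c
  rw [ClassGroup.mk0_eq_mk0_iff] at this
  obtain ⟨x, y, hx, hy, hxy⟩ := this
  -- map the equality of ideals to the localization
  have hIc : Ideal.map (algebraMap A R) (I c : Ideal A) = ⊤ :=
    Ideal.eq_top_of_isUnit_mem _ (Ideal.mem_map_of_mem _ (hmem c))
      (IsLocalization.Away.algebraMap_isUnit (((n : ℤ) : A)))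
  have key : Ideal.span {algebraMap A R x} =
      Ideal.span {algebraMap A R y} * P := by
    have := congrArg (Ideal.map (algebraMap A R)) hxy
    rwa [Ideal.map_mul, Ideal.map_mul, Ideal.map_span, Ideal.map_span, hIc, hmap,
      Set.image_singleton, Set.image_singleton, Ideal.mul_top] at this
  have hy' : algebraMap A R y ≠ 0 := fun h => hy (hinj (by rw [h, map_zero]))
  have hdvd : algebraMap A R y ∣ algebraMap A R x := by
    have : algebraMap A R x ∈ Ideal.span {algebraMap A R y} * P := by
      rw [← key]; exact Ideal.subset_span rfl
    have := Ideal.mul_le_left (I := Ideal.span {algebraMap A R y}) (J := P) this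
    rwa [Ideal.mem_span_singleton] at this
  obtain ⟨z, hz⟩ := hdvd
  refine ⟨z, ?_⟩
  have heq : Ideal.span {algebraMap A R y} * Ideal.span {(z : R)} =
      Ideal.span {algebraMap A R y} * P := by
    rw [← key, Ideal.span_singleton_mul_span_singleton, ← hz]
  exact ((Ideal.span_singleton_mul_right_inj hy').mp heq).symm
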